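/- Let v₁,…,v_N be an enumeration of the vertices {1,…,N} with no repeats (a bijection from {1,…,N} to itself), and for each i let S_i = {v₁,…,v_i}. Then the number of indices i ∈ {1,…,N} for which τ(S_i, v_i) > 0 is exactly k. -/

import Mathlib

open Matrix

noncomputable section

open scoped Classical in
/-- The Moore–Penrose pseudoinverse of a real matrix, characterised by the four
Penrose conditions:  `A A† A = A`, `A† A A† = A†`, `(A A†)ᵀ = A A†`, `(A† A)ᵀ = A† A`. -/
noncomputable def pinv {m n : Type*} [Fintype m] [Fintype n] [DecidableEq m] [DecidableEq n]
    (A : Matrix m n ℝ) : Matrix n m ℝ :=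
  if h : ∃ B : Matrix n m ℝ,
      A * B * A = A ∧ B * A * B = B ∧ (A * B)ᵀ = A * B ∧ (B * A)ᵀ = B * A
  then h.choose else 0

/-- The sampling matrix `M_S` of a subset `S ⊆ {1,…,N}`: rows are indexed by the
elements of `S`, and the row corresponding to `j ∈ S` is the standard basis row vector `eⱼᵀ`. -/
def samp {N : ℕ} (S : Finset (Fin N)) : Matrix {x // x ∈ S} (Fin N) ℝ :=
  fun i j => if (i : Fin N) = j then 1 else 0

/-- Squared Frobenius norm of a matrix. -/
def frobSq {m n : Type*} [Fintype m] [Fintype n] (A : Matrix m n ℝ) : ℝ :=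
  ∑ i, ∑ j, (A i j) ^ 2

/-- The least-squares reconstruction matrix `R_S = U (M_S U)†`. -/
def lsRec {N k : ℕ} (U : Matrix (Fin N) (Fin k) ℝ) (S : Finset (Fin N)) :
    Matrix (Fin N) {x // x ∈ S} ℝ :=
  U * pinv (samp S * U)

/-- `ξ₁(S) = ‖U − R_S M_S U‖_F²`, the noiseless reconstruction error. -/
def xi1 {N k : ℕ} (U : Matrix (Fin N) (Fin k) ℝ) (S : Finset (Fin N)) : ℝ :=
  frobSq (U - lsRec U S * (samp S * U))

/-- `ξ₂(S) = ‖R_S‖_F²`, the noise-sensitivity term. -/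
def xi2 {N k : ℕ} (U : Matrix (Fin N) (Fin k) ℝ) (S : Finset (Fin N)) : ℝ :=
  frobSq (lsRec U S)

/-- `S_m = {v₁,…,v_m}`: the set consisting of the first `m` vertices of the
enumeration `v` (0-indexed: the vertices `v j` for `j < m`). -/
def firstSamples {N : ℕ} (v : Fin N → Fin N) (m : ℕ) : Finset (Fin N) :=
  (Finset.univ.filter fun j : Fin N => (j : ℕ) < m).image v


noncomputable section

namespace Stmt2Aux

open Matrix

/-- Penrose conditions. -/
def IsPinv {m n : Type*} [Fintype m] [Fintype n] (A : Matrix m n ℝ) (B : Matrix n m ℝ) : Prop :=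
  A * B * A = A ∧ B * A * B = B ∧ (A * B)ᵀ = A * B ∧ (B * A)ᵀ = B * A

theorem isPinv_unique {m n : Type*} [Fintype m] [Fintype n] {A : Matrix m n ℝ}
    {B C : Matrix n m ℝ} (hB : IsPinv A B) (hC : IsPinv A C) : B = C := by
  obtain ⟨hB1, hB2, hB3, hB4⟩ := hB
  obtain ⟨hC1, hC2, hC3, hC4⟩ := hC
  have hAB : A * B = A * C := by
    calc A * B = (A * B)ᵀ := hB3.symm
    _ = Bᵀ * Aᵀ := by rw [transpose_mul]
    _ = Bᵀ * (A * C * A)ᵀ := by rw [hC1]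
    _ = Bᵀ * (Aᵀ * (A * C)ᵀ) := by rw [transpose_mul (A * C) A]
    _ = (Bᵀ * Aᵀ) * (A * C) := by rw [hC3, Matrix.mul_assoc]
    _ = (A * B)ᵀ * (A * C) := by rw [transpose_mul]
    _ = (A * B) * (A * C) := by rw [hB3]
    _ = (A * B * A) * C := by rw [Matrix.mul_assoc (A * B) A C]
    _ = A * C := by rw [hB1]
  have hBA : B * A = C * A := by
    calc B * A = (B * A)ᵀ := hB4.symm
    _ = Aᵀ * Bᵀ := by rw [transpose_mul]
    _ = (A * C * A)ᵀ * Bᵀ := by rw [hC1]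
    _ = ((C * A)ᵀ * Aᵀ) * Bᵀ := by rw [Matrix.mul_assoc A C A, transpose_mul]
    _ = (C * A) * (Aᵀ * Bᵀ) := by rw [hC4, Matrix.mul_assoc]
    _ = (C * A) * (B * A)ᵀ := by rw [transpose_mul]
    _ = (C * A) * (B * A) := by rw [hB4]
    _ = C * (A * B * A) := by rw [Matrix.mul_assoc C A (B * A), Matrix.mul_assoc A B A]
    _ = C * A := by rw [hB1]
  calc B = B * A * B := hB2.symm
  _ = (C * A) * B := by rw [hBA]
  _ = C * (A * B) := by rw [Matrix.mul_assoc]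
  _ = C * (A * C) := by rw [hAB]
  _ = C * A * C := by rw [Matrix.mul_assoc]
  _ = C := hC2


variable {k : ℕ}

theorem vmv_mulVec (a b x : Fin k → ℝ) : vecMulVec a b *ᵥ x = (b ⬝ᵥ x) • a := by
  ext i
  simp [vecMulVec, mulVec, dotProduct, Finset.mul_sum, Finset.sum_mul, mul_comm, mul_assoc]
  exact Finset.sum_congr rfl fun j _ => by ring

theorem mul_vmv (M : Matrix (Fin k) (Fin k) ℝ) (a b : Fin k → ℝ) :
    M * vecMulVec a b = vecMulVec (M *ᵥ a) b := by
  ext i j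
  simp [vecMulVec, mul_apply, mulVec, dotProduct, Finset.sum_mul]
  exact Finset.sum_congr rfl fun l _ => by ring

theorem vmv_mul (a b : Fin k → ℝ) (M : Matrix (Fin k) (Fin k) ℝ) :
    vecMulVec a b * M = vecMulVec a (Mᵀ *ᵥ b) := by
  ext i j
  simp [vecMulVec, mul_apply, mulVec, dotProduct, transpose_apply, Finset.mul_sum]
  exact Finset.sum_congr rfl fun l _ => by ring

theorem vmv_mul_vmv (a b c d : Fin k → ℝ) :
    vecMulVec a b * vecMulVec c d = (b ⬝ᵥ c) • vecMulVec a d := by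
  ext i j
  simp [vecMulVec, mul_apply, dotProduct, Finset.sum_mul]
  exact Finset.sum_congr rfl fun l _ => by ring

theorem trace_vmv (a b : Fin k → ℝ) : trace (vecMulVec a b) = a ⬝ᵥ b := by
  simp [trace, vecMulVec, diag, dotProduct]

theorem transpose_vmv (a b : Fin k → ℝ) : (vecMulVec a b)ᵀ = vecMulVec b a := by
  ext i j
  simp [vecMulVec, mul_comm]

theorem vmv_zero_left (b : Fin k → ℝ) : vecMulVec (0 : Fin k → ℝ) b = 0 := by
  ext i j; simp [vecMulVec]

theorem vmv_sub_left (a b c : Fin k → ℝ) :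
    vecMulVec (a - b) c = vecMulVec a c - vecMulVec b c := by
  ext i j; simp [vecMulVec]; ring

theorem vmv_smul_right (a : Fin k → ℝ) (c : ℝ) (b : Fin k → ℝ) :
    vecMulVec a (c • b) = c • vecMulVec a b := by
  ext i j; simp [vecMulVec]; ring

theorem vmv_add_right (a b c : Fin k → ℝ) :
    vecMulVec a (b + c) = vecMulVec a b + vecMulVec a c := by
  ext i j; simp [vecMulVec]; ring

theorem dot_self_nonneg {m : Type*} [Fintype m] (a : m → ℝ) : 0 ≤ a ⬝ᵥ a :=
  Finset.sum_nonneg fun i _ => mul_self_nonneg _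

theorem dot_self_pos {m : Type*} [Fintype m] {a : m → ℝ} (ha : a ≠ 0) : 0 < a ⬝ᵥ a := by
  rcases (dot_self_nonneg a).lt_or_eq with h | h
  · exact h
  · exfalso; apply ha; ext i
    have := (Finset.sum_eq_zero_iff_of_nonneg
      (fun j (_ : j ∈ Finset.univ) => mul_self_nonneg (a j))).mp h.symm i (Finset.mem_univ i)
    have : a i * a i = 0 := this
    simpa using mul_self_eq_zero.mp this

theorem vecMul_symm {H : Matrix (Fin k) (Fin k) ℝ} (hH : Hᵀ = H) (u : Fin k → ℝ) :
    u ᵥ* H = H *ᵥ u := by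
  conv_lhs => rw [← hH]
  rw [vecMul_transpose]

theorem vmv_zero_right (a : Fin k → ℝ) : vecMulVec a (0 : Fin k → ℝ) = 0 := by
  ext i j; simp [vecMulVec]

theorem vmv_sub_right (a b c : Fin k → ℝ) :
    vecMulVec a (b - c) = vecMulVec a b - vecMulVec a c := by
  ext i j; simp [vecMulVec]; ring

theorem comm_of_isPinv {G H : Matrix (Fin k) (Fin k) ℝ} (hG : Gᵀ = G) (hH : Hᵀ = H)
    (hP : IsPinv G H) : G * H = H * G := by
  have := hP.2.2.1
  calc G * H = (G * H)ᵀ := this.symm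
  _ = Hᵀ * Gᵀ := transpose_mul _ _
  _ = H * G := by rw [hG, hH]

theorem dot_w_nonneg {G H : Matrix (Fin k) (Fin k) ℝ} (hH : Hᵀ = H)
    (hP : IsPinv G H) (hPSD : ∀ x, 0 ≤ x ⬝ᵥ G *ᵥ x) (u : Fin k → ℝ) :
    0 ≤ u ⬝ᵥ H *ᵥ u := by
  have h2 := hP.2.1
  have h : H *ᵥ u = H *ᵥ (G *ᵥ (H *ᵥ u)) := by
    rw [mulVec_mulVec, mulVec_mulVec, h2]
  rw [h, dotProduct_mulVec, vecMul_symm hH]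
  exact hPSD _

/-- Rank-one update of the pseudoinverse: case where `u` is in the range of `G`. -/
theorem step_mem (G H : Matrix (Fin k) (Fin k) ℝ) (hG : Gᵀ = G) (hH : Hᵀ = H)
    (hP : IsPinv G H) (hPSD : ∀ x, 0 ≤ x ⬝ᵥ G *ᵥ x) (u : Fin k → ℝ)
    (hu : G *ᵥ (H *ᵥ u) = u) :
    ∃ H', IsPinv (G + vecMulVec u u) H' ∧ H'ᵀ = H' ∧ trace H' ≤ trace H := by
  obtain ⟨h1, h2, h3, h4⟩ := hP
  have hComm : G * H = H * G := comm_of_isPinv hG hH ⟨h1, h2, h3, h4⟩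
  have hd : 0 ≤ u ⬝ᵥ H *ᵥ u := dot_w_nonneg hH ⟨h1, h2, h3, h4⟩ hPSD u
  set w := H *ᵥ u with hw
  have hd1 : (0:ℝ) < 1 + u ⬝ᵥ w := by linarith
  have h0 : (1:ℝ) + u ⬝ᵥ w ≠ 0 := ne_of_gt hd1
  set c := (1 + u ⬝ᵥ w)⁻¹ with hc
  have hc0 : 0 < c := inv_pos.mpr hd1
  set A' := G + vecMulVec u u with hA'
  set H' := H - c • vecMulVec w w with hH'
  have hGww : G * vecMulVec w w = vecMulVec u w := by rw [mul_vmv, hu]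
  have sym' : H'ᵀ = H' := by
    rw [hH', transpose_sub, transpose_smul, transpose_vmv, hH]
  have symA' : A'ᵀ = A' := by
    rw [hA', transpose_add, transpose_vmv, hG]
  have e1 : A' * H' = G * H := by
    have huuH : vecMulVec u u * H = vecMulVec u w := by rw [vmv_mul, hH, ← hw]
    have huw : vecMulVec u u * vecMulVec w w = (u ⬝ᵥ w) • vecMulVec u w :=
      vmv_mul_vmv u u w w
    rw [hA', hH', add_mul, mul_sub, mul_sub, Matrix.mul_smul, Matrix.mul_smul,
      hGww, huuH, huw]
    match_scalars
    · ring
    · rw [hc]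
      field_simp
      ring
  have hGH' : G * H' = G * H - c • vecMulVec u w := by
    rw [hH', mul_sub, Matrix.mul_smul, hGww]
  have e2 : H' * A' = G * H := by
    have h5 : H' * A' = (A' * H')ᵀ := by rw [transpose_mul, sym', symA']
    rw [h5, e1, transpose_mul, hG, hH, hComm]
  refine ⟨H', ⟨?_, ?_, ?_, ?_⟩, sym', ?_⟩
  · rw [e1, hA', mul_add, h1, mul_vmv, ← mulVec_mulVec, ← hw, hu]
  · rw [e2, hComm, Matrix.mul_assoc, hGH', mul_sub, Matrix.mul_smul,
      ← Matrix.mul_assoc, h2, mul_vmv, ← hw, hH']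
  · rw [e1]; exact h3
  · rw [e2]; exact h3
  · rw [hH', trace_sub, trace_smul, trace_vmv, smul_eq_mul]
    have := mul_nonneg hc0.le (dot_self_nonneg w)
    linarith
/-- Rank-one update of the pseudoinverse: case where `u` is not in the range of `G`. -/
theorem step_not_mem (G H : Matrix (Fin k) (Fin k) ℝ) (hG : Gᵀ = G) (hH : Hᵀ = H)
    (hP : IsPinv G H) (hPSD : ∀ x, 0 ≤ x ⬝ᵥ G *ᵥ x) (u : Fin k → ℝ)
    (hq0 : u - G *ᵥ (H *ᵥ u) ≠ 0) :
    ∃ H', IsPinv (G + vecMulVec u u) H' ∧ H'ᵀ = H' ∧ trace H < trace H' := by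
  obtain ⟨h1, h2, h3, h4⟩ := hP
  have hComm : G * H = H * G := comm_of_isPinv hG hH ⟨h1, h2, h3, h4⟩
  have hd : 0 ≤ u ⬝ᵥ H *ᵥ u := dot_w_nonneg hH ⟨h1, h2, h3, h4⟩ hPSD u
  set w := H *ᵥ u with hw
  set q := u - G *ᵥ w with hqdef
  set s := q ⬝ᵥ q with hsdef
  set β := (1 + u ⬝ᵥ w) / (s * s) with hβ
  clear_value w q s β
  have hs : 0 < s := hsdef ▸ dot_self_pos hq0
  have hs0 : s ≠ 0 := ne_of_gt hs
  have hGw : G *ᵥ w = u - q := by rw [hqdef]; abel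
  have hGq : G *ᵥ q = 0 := by
    have h6 : G *ᵥ (G *ᵥ w) = G *ᵥ u := by
      rw [hw, mulVec_mulVec, mulVec_mulVec, Matrix.mul_assoc, hComm, ← Matrix.mul_assoc, h1]
    rw [hqdef, mulVec_sub, h6, sub_self]
  have hHq : H *ᵥ q = 0 := by
    rw [hqdef, mulVec_sub, hw, mulVec_mulVec, mulVec_mulVec, h2, sub_self]
  have hwq : w ⬝ᵥ q = 0 := by
    rw [hw, dotProduct_comm, dotProduct_mulVec, vecMul_symm hH, hHq, zero_dotProduct]
  have h8 : (G *ᵥ w) ⬝ᵥ q = 0 := by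
    rw [dotProduct_comm, dotProduct_mulVec, vecMul_symm hG, hGq, zero_dotProduct]
  have huq : u ⬝ᵥ q = s := by
    have h7 : u ⬝ᵥ q = (q + G *ᵥ w) ⬝ᵥ q := by
      congr 1; rw [hGw]; abel
    rw [h7, add_dotProduct, h8, add_zero]
    exact hsdef.symm
  have hqu : q ⬝ᵥ u = s := by rw [dotProduct_comm]; exact huq
  have hqw : q ⬝ᵥ w = 0 := by rw [dotProduct_comm]; exact hwq
  set A' := G + vecMulVec u u with hA'
  set H' := H - s⁻¹ • (vecMulVec w q + vecMulVec q w) + β • vecMulVec q q with hH'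
  clear_value A' H'
  have sym' : H'ᵀ = H' := by
    rw [hH', transpose_add, transpose_sub, transpose_smul, transpose_smul, transpose_add,
      transpose_vmv, transpose_vmv, transpose_vmv, hH, add_comm (vecMulVec q w)]
  have symA' : A'ᵀ = A' := by rw [hA', transpose_add, transpose_vmv, hG]
  have hGH' : G * H' = G * H - s⁻¹ • vecMulVec (u - q) q := by
    rw [hH', mul_add, mul_sub, Matrix.mul_smul, Matrix.mul_smul, mul_add,
      mul_vmv, mul_vmv, mul_vmv, hGw, hGq, vmv_zero_left, vmv_zero_left, add_zero, smul_zero,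
      add_zero]
  have hH'u : H' *ᵥ u = s⁻¹ • q := by
    rw [hH', add_mulVec, sub_mulVec, smul_mulVec, smul_mulVec, add_mulVec,
      vmv_mulVec, vmv_mulVec, vmv_mulVec, hqu, dotProduct_comm w u, ← hw]
    match_scalars
    · field_simp; norm_num
    · rw [hβ]; field_simp; ring
  have hH'q : H' *ᵥ q = (β * s) • q - w := by
    rw [hH', add_mulVec, sub_mulVec, smul_mulVec, smul_mulVec, add_mulVec,
      vmv_mulVec, vmv_mulVec, vmv_mulVec, hHq, ← hsdef, hwq]
    match_scalars
    · field_simp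
    · field_simp; ring
  have e1 : A' * H' = G * H + s⁻¹ • vecMulVec q q := by
    rw [hA', add_mul, hGH', vmv_mul, sym', hH'u, vmv_smul_right, vmv_sub_left]
    module
  have e2 : H' * A' = G * H + s⁻¹ • vecMulVec q q := by
    have h5 : H' * A' = (A' * H')ᵀ := by rw [transpose_mul, sym', symA']
    rw [h5, e1, transpose_add, transpose_smul, transpose_vmv, h3]
  refine ⟨H', ⟨?_, ?_, ?_, ?_⟩, sym', ?_⟩
  · -- A' * H' * A' = A'
    rw [e1, hA', add_mul, mul_add, mul_add, h1, mul_vmv, ← mulVec_mulVec, ← hw, hGw,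
      smul_mul, vmv_mul, hG, hGq, vmv_zero_right, smul_mul, vmv_mul_vmv, hqu, vmv_sub_left]
    match_scalars
    · ring
    · field_simp
    · field_simp; norm_num
  · -- H' * A' * H' = H'
    have p1 : (G * H) * H' = H - s⁻¹ • vecMulVec w q := by
      rw [hComm, Matrix.mul_assoc, hGH', mul_sub, Matrix.mul_smul, ← Matrix.mul_assoc, h2,
        mul_vmv, mulVec_sub, hHq, sub_zero, ← hw]
    have p2 : vecMulVec q q * H' = vecMulVec q ((β * s) • q - w) := by
      rw [vmv_mul, sym', hH'q]
    rw [e2, add_mul, p1, smul_mul, p2, vmv_sub_right, vmv_smul_right, hH']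
    match_scalars <;> (try ring) <;> (try field_simp) <;> (try ring)
  · rw [e1, transpose_add, transpose_smul, transpose_vmv, h3]
  · rw [e2, transpose_add, transpose_smul, transpose_vmv, h3]
  · -- trace increases
    rw [hH', trace_add, trace_sub, trace_smul, trace_smul, trace_add, trace_vmv, trace_vmv,
      trace_vmv, hwq, hqw, ← hsdef]
    have hb : 0 < β * s := by
      rw [hβ]
      have h9 : 0 < 1 + u ⬝ᵥ w := by linarith
      positivity
    simp only [smul_eq_mul]
    linarith
theorem transpose_mul_self_eq_zero' {m n : Type*} [Fintype m] [Fintype n]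
    {M : Matrix m n ℝ} (h : Mᵀ * M = 0) : M = 0 := by
  ext i j
  have hd : (Mᵀ * M) j j = 0 := by rw [h]; rfl
  rw [mul_apply] at hd
  simp only [transpose_apply] at hd
  have := (Finset.sum_eq_zero_iff_of_nonneg
    (fun l (_ : l ∈ Finset.univ) => mul_self_nonneg (M l j))).mp hd i (Finset.mem_univ i)
  simpa using mul_self_eq_zero.mp this

theorem sum_mulVec' {m : Type*} [Fintype m] {ι : Type*} (s : Finset ι)
    (f : ι → Matrix m m ℝ) (x : m → ℝ) :
    (∑ i ∈ s, f i) *ᵥ x = ∑ i ∈ s, (f i) *ᵥ x := by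
  ext c
  simp only [mulVec, dotProduct, Matrix.sum_apply, Finset.sum_apply, Finset.sum_mul]
  rw [Finset.sum_comm]

section GramSec

variable {N : ℕ} (U : Matrix (Fin N) (Fin k) ℝ)

/-- Row `j` of `U` as a vector in `ℝ^k`. -/
def rowU (j : Fin N) : Fin k → ℝ := fun c => U j c

/-- The Gram matrix of the rows of `U` indexed by `S`. -/
def Gm (S : Finset (Fin N)) : Matrix (Fin k) (Fin k) ℝ :=
  ∑ j ∈ S, vecMulVec (rowU U j) (rowU U j)

theorem samp_mul_apply (S : Finset (Fin N)) (i : {x // x ∈ S}) (d : Fin k) :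
    (samp S * U) i d = U (i : Fin N) d := by
  rw [mul_apply]
  simp [samp]

theorem Gm_eq (S : Finset (Fin N)) : (samp S * U)ᵀ * (samp S * U) = Gm U S := by
  ext c d
  rw [mul_apply, Gm]
  simp only [transpose_apply, samp_mul_apply, Matrix.sum_apply, vecMulVec_apply, rowU]
  exact Finset.sum_coe_sort S fun i => U i c * U i d

theorem Gm_transpose (S : Finset (Fin N)) : (Gm U S)ᵀ = Gm U S := by
  rw [Gm, transpose_sum]
  exact Finset.sum_congr rfl fun j _ => transpose_vmv _ _

theorem Gm_psd (S : Finset (Fin N)) : ∀ x, 0 ≤ x ⬝ᵥ (Gm U S) *ᵥ x := by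
  intro x
  rw [← Gm_eq, ← mulVec_mulVec, dotProduct_mulVec, vecMul_transpose]
  exact dot_self_nonneg _

theorem Gm_insert {S : Finset (Fin N)} {a : Fin N} (ha : a ∉ S) :
    Gm U (insert a S) = Gm U S + vecMulVec (rowU U a) (rowU U a) := by
  rw [Gm, Finset.sum_insert ha, Gm, add_comm]

theorem Gm_mulVec_mem_span (S : Finset (Fin N)) (x : Fin k → ℝ) :
    (Gm U S) *ᵥ x ∈ Submodule.span ℝ (rowU U '' ↑S) := by
  rw [Gm, sum_mulVec']
  refine Submodule.sum_mem _ fun j hj => ?_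
  rw [vmv_mulVec]
  exact Submodule.smul_mem _ _ (Submodule.subset_span ⟨j, hj, rfl⟩)

/-- The key range identity: `A (H G) = A` where `A = samp S * U` and `H` is a symmetric
pseudoinverse of the Gram matrix `G`. -/
theorem mul_HG (S : Finset (Fin N)) {H : Matrix (Fin k) (Fin k) ℝ} (hH : Hᵀ = H)
    (hP : IsPinv (Gm U S) H) : (samp S * U) * (H * Gm U S) = samp S * U := by
  obtain ⟨h1, h2, h3, h4⟩ := hP
  set G := Gm U S with hGdef
  set A := samp S * U with hAdef
  clear_value G A
  have hAA : Aᵀ * A = G := by rw [hAdef, hGdef]; exact Gm_eq U S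
  have hXt : (H * G)ᵀ = G * H := by rw [hGdef, transpose_mul, Gm_transpose, hH]
  have t12 : Aᵀ * (A * (H * G)) = G := by
    rw [← Matrix.mul_assoc, hAA, ← Matrix.mul_assoc, h1]
  have t21 : (A * (H * G))ᵀ * A = G := by
    rw [transpose_mul, hXt, Matrix.mul_assoc, hAA, h1]
  have t22 : (A * (H * G))ᵀ * (A * (H * G)) = G := by
    rw [transpose_mul, hXt, Matrix.mul_assoc, t12, h1]
  have key : (A - A * (H * G))ᵀ * (A - A * (H * G)) = 0 := by
    rw [transpose_sub, Matrix.sub_mul, Matrix.mul_sub, Matrix.mul_sub, hAA, t12, t21, t22]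
    abel
  have h0 := transpose_mul_self_eq_zero' key
  have := sub_eq_zero.mp h0
  exact this.symm

theorem proj_fixed (S : Finset (Fin N)) {H : Matrix (Fin k) (Fin k) ℝ} (hH : Hᵀ = H)
    (hP : IsPinv (Gm U S) H) {j : Fin N} (hj : j ∈ S) :
    (Gm U S * H) *ᵥ rowU U j = rowU U j := by
  have hAHG := mul_HG U S hH hP
  have hXt : (H * Gm U S)ᵀ = Gm U S * H := by
    rw [transpose_mul, Gm_transpose, hH]
  ext c
  have h : ((samp S * U) * (H * Gm U S)) ⟨j, hj⟩ c = (samp S * U) ⟨j, hj⟩ c := by rw [hAHG]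
  rw [mul_apply, samp_mul_apply] at h
  simp only [samp_mul_apply] at h
  simp only [mulVec, dotProduct, rowU]
  rw [← h]
  refine Finset.sum_congr rfl fun d _ => ?_
  rw [← hXt, transpose_apply, mul_comm]

theorem fixed_of_mem_span (S : Finset (Fin N)) {H : Matrix (Fin k) (Fin k) ℝ} (hH : Hᵀ = H)
    (hP : IsPinv (Gm U S) H) {u : Fin k → ℝ}
    (hu : u ∈ Submodule.span ℝ (rowU U '' ↑S)) :
    (Gm U S) *ᵥ (H *ᵥ u) = u := by
  set L : (Fin k → ℝ) →ₗ[ℝ] (Fin k → ℝ) := Matrix.mulVecLin (1 - Gm U S * H) with hL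
  have hgen : rowU U '' ↑S ⊆ (LinearMap.ker L : Set (Fin k → ℝ)) := by
    rintro y ⟨j, hj, rfl⟩
    have : L (rowU U j) = 0 := by
      rw [hL, mulVecLin_apply, sub_mulVec, one_mulVec, proj_fixed U S hH hP hj, sub_self]
    simpa [LinearMap.mem_ker] using this
  have hle : Submodule.span ℝ (rowU U '' ↑S) ≤ LinearMap.ker L :=
    Submodule.span_le.mpr hgen
  have hu0 : L u = 0 := hle hu
  rw [hL, mulVecLin_apply, sub_mulVec, one_mulVec, sub_eq_zero] at hu0
  rw [mulVec_mulVec, hu0.symm]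

theorem frobSq_eq_trace {m n : Type*} [Fintype m] [Fintype n] (M : Matrix m n ℝ) :
    frobSq M = trace (Mᵀ * M) := by
  rw [frobSq, Finset.sum_comm]
  simp [trace, diag, mul_apply, transpose_apply, pow_two]

/-- `ξ₂(S) = trace H` whenever `H` is a symmetric pseudoinverse of the Gram matrix. -/
theorem xi2_eq_trace (hU : Uᵀ * U = 1) (S : Finset (Fin N))
    {H : Matrix (Fin k) (Fin k) ℝ} (hH : Hᵀ = H) (hP : IsPinv (Gm U S) H) :
    xi2 U S = trace H := by
  obtain ⟨h1, h2, h3, h4⟩ := hP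
  set G := Gm U S with hGdef
  set A := samp S * U with hAdef
  clear_value G A
  have hGsym : Gᵀ = G := by rw [hGdef]; exact Gm_transpose U S
  have hAA : Aᵀ * A = G := by rw [hAdef, hGdef]; exact Gm_eq U S
  have hAHG : A * (H * G) = A := by
    rw [hAdef, hGdef]
    exact mul_HG U S hH (by rw [← hGdef]; exact ⟨h1, h2, h3, h4⟩)
  have hCommG : G * H = H * G := comm_of_isPinv hGsym hH ⟨h1, h2, h3, h4⟩
  have hPinvA : IsPinv A (H * Aᵀ) := by
    refine ⟨?_, ?_, ?_, ?_⟩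
    · rw [Matrix.mul_assoc, Matrix.mul_assoc H Aᵀ A, hAA, hAHG]
    · rw [Matrix.mul_assoc H Aᵀ A, hAA, ← Matrix.mul_assoc, h2]
    · rw [← Matrix.mul_assoc, transpose_mul, transpose_mul, transpose_transpose, hH]
      exact (Matrix.mul_assoc A H Aᵀ).symm
    · rw [Matrix.mul_assoc H Aᵀ A, hAA, transpose_mul, hGsym, hH, hCommG]
  have hex : ∃ B : Matrix (Fin k) {x // x ∈ S} ℝ,
      A * B * A = A ∧ B * A * B = B ∧ (A * B)ᵀ = A * B ∧ (B * A)ᵀ = B * A :=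
    ⟨H * Aᵀ, hPinvA⟩
  have hpinv : pinv A = H * Aᵀ := by
    rw [pinv, dif_pos hex]
    exact isPinv_unique hex.choose_spec hPinvA
  have hfU : frobSq (U * (H * Aᵀ)) = frobSq (H * Aᵀ) := by
    rw [frobSq_eq_trace, frobSq_eq_trace (H * Aᵀ), transpose_mul, Matrix.mul_assoc,
      ← Matrix.mul_assoc Uᵀ U (H * Aᵀ), hU, Matrix.one_mul]
  have hfH : frobSq (H * Aᵀ) = trace H := by
    rw [frobSq_eq_trace, transpose_mul, transpose_transpose, hH, Matrix.trace_mul_cycle,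
      Matrix.mul_assoc H Aᵀ A, hAA, h2]
  rw [xi2, lsRec, ← hAdef, hpinv, hfU, hfH]

end GramSec
section FinalSec

variable {N : ℕ} (U : Matrix (Fin N) (Fin k) ℝ)

theorem qne_of_not_mem_span (S : Finset (Fin N)) {H : Matrix (Fin k) (Fin k) ℝ}
    (hP : IsPinv (Gm U S) H) {u : Fin k → ℝ}
    (hu : u ∉ Submodule.span ℝ (rowU U '' ↑S)) :
    u - (Gm U S) *ᵥ (H *ᵥ u) ≠ 0 := by
  intro h
  apply hu
  have h2 : u = (Gm U S) *ᵥ (H *ᵥ u) := by rwa [sub_eq_zero] at h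
  rw [h2]
  exact Gm_mulVec_mem_span U S _

theorem exists_pinv (S : Finset (Fin N)) : ∃ H, IsPinv (Gm U S) H ∧ Hᵀ = H := by
  classical
  induction S using Finset.induction_on with
  | empty =>
      refine ⟨0, ?_, ?_⟩
      · have h0 : Gm U (∅ : Finset (Fin N)) = 0 := by simp [Gm]
        rw [h0]
        exact ⟨by simp, by simp, by simp, by simp⟩
      · simp
  | @insert a S' ha ih =>
      obtain ⟨H, hP, hH⟩ := ih
      by_cases hmem : rowU U a ∈ Submodule.span ℝ (rowU U '' ↑S')
      · obtain ⟨H', hP', hH', _⟩ := step_mem (Gm U S') H (Gm_transpose U S') hH hP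
          (Gm_psd U S') (rowU U a) (fixed_of_mem_span U S' hH hP hmem)
        exact ⟨H', by rw [Gm_insert U ha]; exact hP', hH'⟩
      · obtain ⟨H', hP', hH', _⟩ := step_not_mem (Gm U S') H (Gm_transpose U S') hH hP
          (Gm_psd U S') (rowU U a) (qne_of_not_mem_span U S' hP hmem)
        exact ⟨H', by rw [Gm_insert U ha]; exact hP', hH'⟩

theorem not_mem_firstSamples (v : Fin N → Fin N) (hv : Function.Injective v) (i : Fin N) :
    v i ∉ firstSamples v (i : ℕ) := by
  simp only [firstSamples, Finset.mem_image, Finset.mem_filter, Finset.mem_univ, true_and]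
  rintro ⟨j, hj, hji⟩
  cases hv hji
  exact absurd hj (lt_irrefl _)

theorem firstSamples_succ (v : Fin N → Fin N) (i : Fin N) :
    firstSamples v ((i : ℕ) + 1) = insert (v i) (firstSamples v (i : ℕ)) := by
  rw [firstSamples, firstSamples, ← Finset.image_insert]
  congr 1
  ext j
  simp only [Finset.mem_insert, Finset.mem_filter, Finset.mem_univ, true_and]
  constructor
  · intro h
    rcases Nat.lt_succ_iff_lt_or_eq.mp h with h | h
    · exact Or.inr h
    · exact Or.inl (Fin.ext h)
  · rintro (rfl | h)
    · omega
    · omega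

theorem rows_firstSamples (v : Fin N → Fin N) (m : ℕ) :
    rowU U '' ↑(firstSamples v m) = (fun j => rowU U (v j)) '' {j : Fin N | (j : ℕ) < m} := by
  ext y
  simp only [firstSamples, Finset.coe_image, Set.mem_image, Finset.mem_coe,
    Finset.mem_filter, Finset.mem_univ, true_and, Set.mem_setOf_eq]
  constructor
  · rintro ⟨z, ⟨j, hj, rfl⟩, rfl⟩
    exact ⟨j, hj, rfl⟩
  · rintro ⟨j, hj, rfl⟩
    exact ⟨v j, ⟨j, hj, rfl⟩, rfl⟩

theorem span_rows_top (hU : Uᵀ * U = 1) :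
    Submodule.span ℝ (Set.range (rowU U)) = ⊤ := by
  rw [Submodule.eq_top_iff']
  intro y
  have hy : y = Uᵀ *ᵥ (U *ᵥ y) := by rw [mulVec_mulVec, hU, one_mulVec]
  have h2 : Uᵀ *ᵥ (U *ᵥ y) = ∑ j, (U *ᵥ y) j • rowU U j := by
    ext c
    simp only [mulVec, dotProduct, transpose_apply, Finset.sum_apply, Pi.smul_apply,
      smul_eq_mul, rowU]
    exact Finset.sum_congr rfl fun j _ => mul_comm _ _
  rw [hy, h2]
  exact Submodule.sum_mem _ fun j _ => Submodule.smul_mem _ _ (Submodule.subset_span ⟨j, rfl⟩)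

end FinalSec

open scoped Classical in
/-- Counting lemma: the number of indices at which the span of the prefix grows equals the
dimension of the total span, here `n` when the vectors span everything. -/
theorem count_span {N n : ℕ} (x : Fin N → (Fin n → ℝ))
    (htop : Submodule.span ℝ (x '' {j : Fin N | (j : ℕ) < N}) = ⊤) :
    (Finset.univ.filter fun i : Fin N =>
        x i ∉ Submodule.span ℝ (x '' {j : Fin N | (j : ℕ) < (i : ℕ)})).card = n := by
  classical
  have main : ∀ m, m ≤ N → (Finset.univ.filter fun i : Fin N =>
      (i : ℕ) < m ∧ x i ∉ Submodule.span ℝ (x '' {j : Fin N | (j : ℕ) < (i : ℕ)})).card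
      = Module.finrank ℝ (Submodule.span ℝ (x '' {j : Fin N | (j : ℕ) < m})) := by
    intro m
    induction m with
    | zero =>
        intro _
        have h1 : {j : Fin N | (j : ℕ) < 0} = (∅ : Set (Fin N)) := by ext j; simp
        rw [h1, Set.image_empty, Submodule.span_empty, finrank_bot]
        simp
    | succ m ih =>
        intro hm1
        have hm : m < N := hm1
        have ihm := ih (le_of_lt hm)
        set a : Fin N := ⟨m, hm⟩ with hadef
        have hav : (a : ℕ) = m := rfl
        have hset : {j : Fin N | (j : ℕ) < m + 1} = insert a {j : Fin N | (j : ℕ) < m} := by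
          ext j
          simp only [Set.mem_setOf_eq, Set.mem_insert_iff, hadef, Fin.ext_iff]
          omega
        have himg : x '' {j : Fin N | (j : ℕ) < m + 1}
            = insert (x a) (x '' {j : Fin N | (j : ℕ) < m}) := by
          rw [hset, Set.image_insert_eq]
        by_cases hmem : x a ∈ Submodule.span ℝ (x '' {j : Fin N | (j : ℕ) < m})
        · have hspan : Submodule.span ℝ (x '' {j : Fin N | (j : ℕ) < m + 1})
              = Submodule.span ℝ (x '' {j : Fin N | (j : ℕ) < m}) := by
            rw [himg, Submodule.span_insert_eq_span hmem]
          have hfilt : (Finset.univ.filter fun i : Fin N =>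
              (i : ℕ) < m + 1 ∧ x i ∉ Submodule.span ℝ (x '' {j : Fin N | (j : ℕ) < (i : ℕ)}))
              = (Finset.univ.filter fun i : Fin N =>
              (i : ℕ) < m ∧ x i ∉ Submodule.span ℝ (x '' {j : Fin N | (j : ℕ) < (i : ℕ)})) := by
            apply Finset.filter_congr
            intro i _
            constructor
            · rintro ⟨hi, hni⟩
              rcases Nat.lt_succ_iff_lt_or_eq.mp hi with h | h
              · exact ⟨h, hni⟩
              · exfalso
                have hia : i = a := Fin.ext (by rw [hav]; exact h)
                subst hia
                exact hni (by rw [hav]; exact hmem)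
            · rintro ⟨hi, hni⟩
              exact ⟨Nat.lt_succ_of_lt hi, hni⟩
          rw [hfilt, hspan, ihm]
        · -- dimension increases by one
          have hx0 : x a ≠ 0 := fun h => hmem (h ▸ Submodule.zero_mem _)
          have hinf : (ℝ ∙ x a) ⊓ Submodule.span ℝ (x '' {j : Fin N | (j : ℕ) < m}) = ⊥ := by
            rw [Submodule.eq_bot_iff]
            intro y hy
            obtain ⟨hy1, hy2⟩ := Submodule.mem_inf.mp hy
            obtain ⟨c, rfl⟩ := Submodule.mem_span_singleton.mp hy1
            rcases eq_or_ne c 0 with rfl | hc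
            · simp
            · exfalso
              apply hmem
              have h5 := Submodule.smul_mem _ c⁻¹ hy2
              rwa [inv_smul_smul₀ hc] at h5
          have hsum := Submodule.finrank_sup_add_finrank_inf_eq
            (ℝ ∙ x a) (Submodule.span ℝ (x '' {j : Fin N | (j : ℕ) < m}))
          rw [hinf, finrank_bot, finrank_span_singleton hx0, add_zero] at hsum
          have hrank : Module.finrank ℝ (Submodule.span ℝ (x '' {j : Fin N | (j : ℕ) < m + 1}))
              = Module.finrank ℝ (Submodule.span ℝ (x '' {j : Fin N | (j : ℕ) < m})) + 1 := by
            rw [himg, Submodule.span_insert]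
            rw [hsum]
            ring
          have hfilt : (Finset.univ.filter fun i : Fin N =>
              (i : ℕ) < m + 1 ∧ x i ∉ Submodule.span ℝ (x '' {j : Fin N | (j : ℕ) < (i : ℕ)}))
              = insert a (Finset.univ.filter fun i : Fin N =>
              (i : ℕ) < m ∧ x i ∉ Submodule.span ℝ (x '' {j : Fin N | (j : ℕ) < (i : ℕ)})) := by
            ext i
            simp only [Finset.mem_filter, Finset.mem_univ, true_and, Finset.mem_insert]
            constructor
            · rintro ⟨hi, hni⟩
              rcases Nat.lt_succ_iff_lt_or_eq.mp hi with h | h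
              · exact Or.inr ⟨h, hni⟩
              · exact Or.inl (Fin.ext (by rw [hav]; exact h))
            · rintro (rfl | ⟨hi, hni⟩)
              · exact ⟨by omega, by rw [hav]; exact hmem⟩
              · exact ⟨Nat.lt_succ_of_lt hi, hni⟩
          have hanotin : a ∉ (Finset.univ.filter fun i : Fin N =>
              (i : ℕ) < m ∧ x i ∉ Submodule.span ℝ (x '' {j : Fin N | (j : ℕ) < (i : ℕ)})) := by
            simp only [Finset.mem_filter, Finset.mem_univ, true_and, not_and, hav]
            intro h
            omega
          rw [hfilt, Finset.card_insert_of_notMem hanotin, hrank, ihm]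
  have h := main N le_rfl
  rw [htop, finrank_top, Module.finrank_pi, Fintype.card_fin] at h
  have hfe : (Finset.univ.filter fun i : Fin N =>
      x i ∉ Submodule.span ℝ (x '' {j : Fin N | (j : ℕ) < (i : ℕ)}))
      = (Finset.univ.filter fun i : Fin N =>
      (i : ℕ) < N ∧ x i ∉ Submodule.span ℝ (x '' {j : Fin N | (j : ℕ) < (i : ℕ)})) := by
    apply Finset.filter_congr
    intro i _
    simp [i.isLt]
  rw [hfe]
  exact h
end Stmt2Aux

open Stmt2Aux in
theorem stmt2 (N k : ℕ) (hN : 0 < N) (hk : 0 < k) (hkN : k ≤ N)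
    (U : Matrix (Fin N) (Fin k) ℝ) (hU : Uᵀ * U = 1)
    (v : Fin N → Fin N) (hv : Function.Bijective v) :
    (Finset.univ.filter fun i : Fin N =>
        0 < ((k : ℝ) / N) *
          (xi2 U (firstSamples v ((i : ℕ) + 1)) -
            xi2 U ((firstSamples v ((i : ℕ) + 1)).erase (v i)))).card = k := by
  classical
  set x : Fin N → (Fin k → ℝ) := fun j => rowU U (v j) with hx
  have hkN' : 0 < (k : ℝ) / N := div_pos (by exact_mod_cast hk) (by exact_mod_cast hN)
  have hchar : ∀ i : Fin N,
      (0 < ((k : ℝ) / N) * (xi2 U (firstSamples v ((i : ℕ) + 1)) -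
        xi2 U ((firstSamples v ((i : ℕ) + 1)).erase (v i))))
      ↔ x i ∉ Submodule.span ℝ (x '' {j : Fin N | (j : ℕ) < (i : ℕ)}) := by
    intro i
    have herase : (firstSamples v ((i : ℕ) + 1)).erase (v i) = firstSamples v (i : ℕ) := by
      rw [firstSamples_succ, Finset.erase_insert (not_mem_firstSamples v hv.1 i)]
    obtain ⟨H, hP, hH⟩ := exists_pinv U (firstSamples v (i : ℕ))
    have hT : xi2 U (firstSamples v (i : ℕ)) = trace H := xi2_eq_trace U hU _ hH hP
    have hGins : Gm U (firstSamples v ((i : ℕ) + 1))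
        = Gm U (firstSamples v (i : ℕ)) + vecMulVec (rowU U (v i)) (rowU U (v i)) := by
      rw [firstSamples_succ, Gm_insert U (not_mem_firstSamples v hv.1 i)]
    have hrows := rows_firstSamples U v (i : ℕ)
    by_cases hmem : x i ∈ Submodule.span ℝ (x '' {j : Fin N | (j : ℕ) < (i : ℕ)})
    · have hmem' : rowU U (v i) ∈ Submodule.span ℝ (rowU U '' ↑(firstSamples v (i : ℕ))) := by
        rw [hrows]; exact hmem
      obtain ⟨H', hP', hH', htr⟩ := step_mem (Gm U (firstSamples v (i : ℕ))) H
        (Gm_transpose U _) hH hP (Gm_psd U _) (rowU U (v i))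
        (fixed_of_mem_span U _ hH hP hmem')
      have hS : xi2 U (firstSamples v ((i : ℕ) + 1)) = trace H' :=
        xi2_eq_trace U hU _ hH' (by rw [hGins]; exact hP')
      refine iff_of_false ?_ (not_not_intro hmem)
      intro hpos
      rw [herase, hS, hT] at hpos
      nlinarith [hpos, htr, hkN']
    · have hmem' : rowU U (v i) ∉ Submodule.span ℝ (rowU U '' ↑(firstSamples v (i : ℕ))) := by
        rw [hrows]; exact hmem
      obtain ⟨H', hP', hH', htr⟩ := step_not_mem (Gm U (firstSamples v (i : ℕ))) H
        (Gm_transpose U _) hH hP (Gm_psd U _) (rowU U (v i))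
        (qne_of_not_mem_span U _ hP hmem')
      have hS : xi2 U (firstSamples v ((i : ℕ) + 1)) = trace H' :=
        xi2_eq_trace U hU _ hH' (by rw [hGins]; exact hP')
      refine iff_of_true ?_ hmem
      rw [herase, hS, hT]
      exact mul_pos hkN' (by linarith)
  have hfe : (Finset.univ.filter fun i : Fin N =>
      0 < ((k : ℝ) / N) * (xi2 U (firstSamples v ((i : ℕ) + 1)) -
        xi2 U ((firstSamples v ((i : ℕ) + 1)).erase (v i))))
      = (Finset.univ.filter fun i : Fin N =>
      x i ∉ Submodule.span ℝ (x '' {j : Fin N | (j : ℕ) < (i : ℕ)})) :=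
    Finset.filter_congr fun i _ => hchar i
  rw [hfe]
  have hall : x '' {j : Fin N | (j : ℕ) < N} = Set.range (rowU U) := by
    ext y
    constructor
    · rintro ⟨j, _, rfl⟩
      exact ⟨v j, rfl⟩
    · rintro ⟨j, rfl⟩
      obtain ⟨j', rfl⟩ := hv.2 j
      exact ⟨j', j'.isLt, rfl⟩
  have htop : Submodule.span ℝ (x '' {j : Fin N | (j : ℕ) < N}) = ⊤ := by
    rw [hall]
    exact span_rows_top U hU
  exact count_span x htop
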